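/- Fix a horizon T > 0 and slope α > 0 with α·T ≥ 2. For every switch point s' ∈ [0, T] there exists a threshold θ ∈ [0, T] such that r(s', θ) / OPT(θ) ≤ √(2/(α·T)). Hence no switch-point strategy achieves a worst-case competitive ratio better than √(2/(α·T)). -/
import Mathlib


/-- Reward of the switch-point-`s` strategy in the improving two-armed bandit:
if `θ ≤ s` the agent witnesses the increase and earns `(α/2)(T-θ)²`;
otherwise it switches to the stable arm and earns `T - s`. -/
noncomputable def reward (T α s θ : ℝ) : ℝ :=
  if θ ≤ s then α / 2 * (T - θ) ^ 2 else T - s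

/-- Optimal hindsight reward. -/
noncomputable def OPT (T α θ : ℝ) : ℝ :=
  max T (α / 2 * (T - θ) ^ 2)

theorem stmt1 (T α : ℝ) (hT : 0 < T) (hα : 0 < α) (hαT : 2 ≤ α * T) :
    ∀ s' ∈ Set.Icc (0 : ℝ) T, ∃ θ ∈ Set.Icc (0 : ℝ) T,
      reward T α s' θ / OPT T α θ ≤ Real.sqrt (2 / (α * T)) := by
  intro s' hs'
  obtain ⟨hs0, hsT⟩ := hs'
  have hαT0 : 0 < α * T := mul_pos hα hT
  set c := Real.sqrt (2 / (α * T)) with hc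
  have hc2 : c ^ 2 = 2 / (α * T) := Real.sq_sqrt (by positivity)
  have hc0 : 0 < c := Real.sqrt_pos.mpr (by positivity)
  have hc1 : c ≤ 1 := by
    have h2 : c ^ 2 ≤ 1 := by rw [hc2, div_le_one hαT0]; linarith
    nlinarith
  by_cases hcase : T - s' ≤ c * T
  · refine ⟨T, ⟨le_of_lt hT, le_refl T⟩, ?_⟩
    have hOPT : OPT T α T = T := by
      simp [OPT, hT.le]
    rw [hOPT, reward]
    by_cases h : T ≤ s'
    · simp only [h, if_true, sub_self]
      rw [div_le_iff₀ hT]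
      nlinarith
    · simp only [h, if_false]
      rw [div_le_iff₀ hT]
      linarith
  · push_neg at hcase
    set d := T - s' with hd
    have hd0 : 0 < d := by nlinarith
    have hcTd : c * T * d < d ^ 2 := by nlinarith
    have hkey : α * c * (c * T) = 2 := by
      have : α * T * c ^ 2 = 2 := by
        rw [hc2]; field_simp
      nlinarith
    set θ := T - Real.sqrt (c * T * d) with hθ
    have hsq0 : 0 ≤ c * T * d := by positivity
    have hsq : Real.sqrt (c * T * d) ^ 2 = c * T * d := Real.sq_sqrt hsq0
    have hlt : Real.sqrt (c * T * d) < d := by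
      rw [Real.sqrt_lt' hd0]; exact hcTd
    have hθs : s' < θ := by
      rw [hθ]; linarith
    have hθT : θ ≤ T := by
      have := Real.sqrt_nonneg (c * T * d); rw [hθ]; linarith
    have hθ0 : 0 ≤ θ := by
      rw [hθ]
      have hle : Real.sqrt (c * T * d) ≤ T := by
        have h2 : c * T * d ≤ T ^ 2 := by nlinarith
        calc Real.sqrt (c * T * d) ≤ Real.sqrt (T ^ 2) := Real.sqrt_le_sqrt h2
          _ = T := Real.sqrt_sq hT.le
      linarith
    refine ⟨θ, ⟨hθ0, hθT⟩, ?_⟩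
    have hrew : reward T α s' θ = d := by
      rw [reward, if_neg (not_le.mpr hθs)]
    have hOPTge : d / c ≤ OPT T α θ := by
      have h1 : α / 2 * (T - θ) ^ 2 = d / c := by
        rw [hθ]
        have : (T - (T - Real.sqrt (c * T * d))) ^ 2 = c * T * d := by
          rw [sub_sub_cancel]; exact hsq
        rw [this]
        field_simp
        nlinarith
      rw [← h1]
      exact le_max_right _ _
    have hOPT0 : 0 < OPT T α θ := lt_of_lt_of_le hT (le_max_left _ _)
    rw [hrew, div_le_iff₀ hOPT0]
    have : c * (d / c) ≤ c * OPT T α θ := by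
      apply mul_le_mul_of_nonneg_left hOPTge hc0.le
    rw [mul_div_cancel₀ _ (ne_of_gt hc0)] at this
    exact this
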